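/- In a circle diagram formed by gluing a cap diagram on top of a cup diagram (both of type D), any circle that crosses the middle axis either contains both members of every linked pair it meets, or contains exactly one member of every linked pair it meets. -/

import Mathlib

namespace TypeD

attribute [local instance] Classical.propDecidable

/-- A `{+,-}`-sequence of length `n`; `true` encodes a minus sign. -/
abbrev Seq (n : ℕ) := Fin n → Bool

/-- The sequence has an even number of minus signs. -/
def EvenMinus {n : ℕ} (α : Seq n) : Prop :=
  Even ({i : Fin n | α i = true}.ncard)

/-- The extended diagrammatical weight of a sequence, as labels on `4n` points
(indices `0,…,4n-1` correspond to the points `-2n,…,-1,1,…,2n`):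
`n` frozen pluses on the left, then the antisymmetric extension of `α`,
then `n` frozen minuses on the right.  `true` = minus = `∧`, `false` = plus = `∨`. -/
def extLab {n : ℕ} (α : Seq n) (i : Fin (4 * n)) : Bool :=
  if _h1 : i.val < n then false
  else if _h2 : i.val < 2 * n then !α ⟨2 * n - 1 - i.val, by omega⟩
  else if _h3 : i.val < 3 * n then α ⟨i.val - 2 * n, by omega⟩
  else true

/-- A perfect matching of `m` points on a line by non-crossing arcs drawn in the
lower half plane, encoded as a fixed-point free involution. -/
structure IsMatching {m : ℕ} (f : Fin m → Fin m) : Prop where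
  invol : ∀ i, f (f i) = i
  nofix : ∀ i, f i ≠ i
  noncross : ∀ a b : Fin m, a < f a → b < f b → a < b → b < f a → f b < f a

/-- The non-crossing matching of the `4n` extended points of `α` in which every arc
joins a plus to a minus lying to its right. -/
def IsNC {n : ℕ} (α : Seq n) (f : Fin (4 * n) → Fin (4 * n)) : Prop :=
  IsMatching f ∧ ∀ i, i < f i → extLab α i = false ∧ extLab α (f i) = true

/-- The arc of `f` starting at `i` crosses the middle of the diagram. -/
def Cross {n : ℕ} (f : Fin (4 * n) → Fin (4 * n)) (i : Fin (4 * n)) : Prop :=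
  i.val < 2 * n ∧ 2 * n ≤ (f i).val

/-- The rank of a middle-crossing arc (with left endpoint `a`), counting from the
innermost one (which has rank `1`). -/
noncomputable def rank {n : ℕ} (f : Fin (4 * n) → Fin (4 * n)) (a : Fin (4 * n)) : ℕ :=
  {b : Fin (4 * n) | Cross f b ∧ a ≤ b}.ncard

/-- The cup diagram `C(w)` of a sequence: the non-crossing matching `f` of the
extended weight, where the middle-crossing arcs, taken from innermost outwards in
consecutive pairs, have two of their boundary points exchanged (the resulting pairs
of arcs being `linked`, i.e. decorated). `g` is the resulting pairing of endpoints. -/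
structure CupDiagram (n : ℕ) (α : Seq n) where
  f : Fin (4 * n) → Fin (4 * n)
  g : Fin (4 * n) → Fin (4 * n)
  matching : IsNC α f
  agree : ∀ i, ¬ Cross f i → ¬ Cross f (f i) → g i = f i
  link : ∀ a b, Cross f a → Cross f b → Odd (rank f a) → rank f b = rank f a + 1 →
    g a = f b ∧ g b = f a ∧ g (f b) = a ∧ g (f a) = b

/-- `g` is (the pairing underlying) the cup diagram of `α`. -/
def IsCupDiagram {n : ℕ} (α : Seq n) (g : Fin (4 * n) → Fin (4 * n)) : Prop :=
  ∃ D : CupDiagram n α, D.g = g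

/-- The arcs of the cup diagram starting at `a` and at `b` form a linked
(decorated) pair. -/
def CupDiagram.Linked {n : ℕ} {α : Seq n} (D : CupDiagram n α) (a b : Fin (4 * n)) : Prop :=
  Cross D.f a ∧ Cross D.f b ∧ Odd (rank D.f a) ∧ rank D.f b = rank D.f a + 1

/-- The weight `v` orients the (cup or cap) diagram `g`: every arc carries exactly one
`∧` and one `∨`. -/
def Orients {n : ℕ} (v : Seq n) (g : Fin (4 * n) → Fin (4 * n)) : Prop :=
  ∀ i, extLab v (g i) ≠ extLab v i

/-- The number of clockwise oriented cups (cups with `∧` at their left endpoint). -/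
noncomputable def clCount {n : ℕ} (v : Seq n) (g : Fin (4 * n) → Fin (4 * n)) : ℕ :=
  {i : Fin (4 * n) | i < g i ∧ extLab v i = true}.ncard

/-- The mirror (reflection through the middle vertical axis) of a point. -/
def mirror {n : ℕ} (i : Fin (4 * n)) : Fin (4 * n) :=
  ⟨4 * n - 1 - i.val, by have := i.isLt; omega⟩


/-- Two points lie on the same circle of the circle diagram obtained by gluing the cap
diagram (with pairing `gt`) on top of the cup diagram (with pairing `gb`). -/
def CircRel {m : ℕ} (gb gt : Fin m → Fin m) : Fin m → Fin m → Prop :=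
  Relation.EqvGen fun x y => gb x = y ∨ gt x = y

/-- The circle through the point `p`, as a set of boundary points. -/
def circleAt {m : ℕ} (gb gt : Fin m → Fin m) (p : Fin m) : Set (Fin m) :=
  {x | CircRel gb gt p x}

/-- The number of distinct linked (decorated) pairs of the circle diagram met by the
set of points `C` (each pair counted via its first member). -/
noncomputable def nPairs {n : ℕ} {α β : Seq n} (D : CupDiagram n α) (E : CupDiagram n β)
    (C : Set (Fin (4 * n))) : ℕ :=
  {a : Fin (4 * n) | ∃ b, (D.Linked a b ∨ E.Linked a b) ∧ (a ∈ C ∨ b ∈ C)}.ncard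

/-- A circle is red if it passes through more than one upper outer point, more than one
lower outer point, or meets an odd number of distinct linked pairs. -/
noncomputable def RedCircle {n : ℕ} {α β : Seq n} (D : CupDiagram n α)
    (E : CupDiagram n β) (C : Set (Fin (4 * n))) : Prop :=
  1 < {i | i ∈ C ∧ 3 * n ≤ i.val}.ncard ∨
  1 < {i | i ∈ C ∧ i.val < n}.ncard ∨
  Odd (nPairs D E C)

/-- A circle is black if it passes through no outer point and meets an even number of
distinct linked pairs. -/
noncomputable def BlackCircle {n : ℕ} {α β : Seq n} (D : CupDiagram n α)
    (E : CupDiagram n β) (C : Set (Fin (4 * n))) : Prop :=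
  (∀ i ∈ C, n ≤ i.val ∧ i.val < 3 * n) ∧ Even (nPairs D E C)

/-- A circle is green if it is neither black nor red. -/
noncomputable def GreenCircle {n : ℕ} {α β : Seq n} (D : CupDiagram n α)
    (E : CupDiagram n β) (C : Set (Fin (4 * n))) : Prop :=
  ¬ BlackCircle D E C ∧ ¬ RedCircle D E C

section Aux

variable {m : ℕ}

/-- A non-crossing matching compatible with a general labelling. -/
def NCgen (L : Fin m → Bool) (f : Fin m → Fin m) : Prop :=
  IsMatching f ∧ ∀ i, i < f i → L i = false ∧ L (f i) = true

lemma IsMatching.lt_or_lt {f : Fin m → Fin m} (h : IsMatching f) (i : Fin m) :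
    i < f i ∨ f i < i := by
  rcases lt_trichotomy i (f i) with h1 | h1 | h1
  · exact Or.inl h1
  · exact absurd h1.symm (h.nofix i)
  · exact Or.inr h1

lemma IsMatching.stab {f : Fin m → Fin m} (h : IsMatching f) {i j : Fin m}
    (h1 : i < f i) (h2 : i < j) (h3 : j < f i) : i < f j ∧ f j < f i := by
  rcases h.lt_or_lt j with hj | hj
  · exact ⟨h2.trans hj, h.noncross i j h1 hj h2 h3⟩
  · have hji : f j ≠ i := by
      intro e
      have hj2 := h.invol j
      rw [e] at hj2
      rw [hj2] at h3
      exact lt_irrefl _ h3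
    have hni : ¬ f j < i := by
      intro hlt
      have := h.noncross (f j) i (by rw [h.invol]; exact hj) h1 hlt
        (by rw [h.invol]; exact h2)
      rw [h.invol] at this
      exact absurd h3 (not_lt.mpr this.le)
    have hi : i < f j := by
      rcases lt_trichotomy (f j) i with h' | h' | h'
      · exact absurd h' hni
      · exact absurd h' hji
      · exact h'
    exact ⟨hi, hj.trans h3⟩

lemma ncgen_lt {L : Fin m → Bool} {f : Fin m → Fin m} (hf : NCgen L f) {i : Fin m}
    (hLi : L i = false) : i < f i := by
  rcases hf.1.lt_or_lt i with h | h
  · exact h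
  · have h2 := (hf.2 (f i) (by rw [hf.1.invol]; exact h)).2
    rw [hf.1.invol] at h2
    rw [hLi] at h2
    exact absurd h2 (by simp)

lemma ncgen_gt {L : Fin m → Bool} {f : Fin m → Fin m} (hf : NCgen L f) {i : Fin m}
    (hLi : L i = true) : f i < i := by
  rcases hf.1.lt_or_lt i with h | h
  · have h2 := (hf.2 i h).1
    rw [hLi] at h2
    exact absurd h2 (by simp)
  · exact h

lemma nc_unique_aux (L : Fin m → Bool) :
    ∀ s : ℕ, ∀ f f' : Fin m → Fin m, NCgen L f → NCgen L f' →
      ∀ i, i < f i → (f i).val - i.val ≤ s → f' i = f i := by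
  intro s
  induction s with
  | zero =>
      intro f f' hf hf' i h1 h2
      have := Fin.lt_def.mp h1
      omega
  | succ s ih =>
      intro f f' hf hf' i h1 hspan
      have hLi : L i = false := (hf.2 i h1).1
      have h1' : i < f' i := ncgen_lt hf' hLi
      rcases lt_trichotomy (f' i) (f i) with hc | hc | hc
      · exfalso
        have hLj : L (f' i) = true := (hf'.2 i h1').2
        have hfj : f (f' i) < f' i := ncgen_gt hf hLj
        obtain ⟨hk1, hk2⟩ := hf.1.stab h1 h1' hc
        have hkk : f (f' i) < f (f (f' i)) := by rw [hf.1.invol]; exact hfj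
        have hspan2 : (f (f (f' i))).val - (f (f' i)).val ≤ s := by
          rw [hf.1.invol]
          have v1 := Fin.lt_def.mp hk1
          have v2 := Fin.lt_def.mp hc
          have v3 := Fin.lt_def.mp h1
          omega
        have he := ih f f' hf hf' (f (f' i)) hkk hspan2
        have he2 : f' (f (f' i)) = f' i := by rw [he, hf.1.invol]
        have he3 := congrArg f' he2
        rw [hf'.1.invol, hf'.1.invol] at he3
        rw [he3] at hk1
        exact lt_irrefl _ hk1
      · exact hc
      · exfalso
        have hLj : L (f i) = true := (hf.2 i h1).2
        have hfj : f' (f i) < f i := ncgen_gt hf' hLj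
        obtain ⟨hk1, hk2⟩ := hf'.1.stab h1' h1 hc
        have hkk : f' (f i) < f' (f' (f i)) := by rw [hf'.1.invol]; exact hfj
        have hspan2 : (f' (f' (f i))).val - (f' (f i)).val ≤ s := by
          rw [hf'.1.invol]
          have v1 := Fin.lt_def.mp hk1
          have v3 := Fin.lt_def.mp h1
          omega
        have he := ih f' f hf' hf (f' (f i)) hkk hspan2
        have he2 : f (f' (f i)) = f i := by rw [he, hf'.1.invol]
        have he3 := congrArg f he2
        rw [hf.1.invol, hf.1.invol] at he3
        rw [he3] at hk1
        exact lt_irrefl _ hk1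

lemma nc_unique {L : Fin m → Bool} {f f' : Fin m → Fin m}
    (hf : NCgen L f) (hf' : NCgen L f') : f = f' := by
  funext i
  rcases hf.1.lt_or_lt i with h | h
  · exact (nc_unique_aux L ((f i).val - i.val) f f' hf hf' i h le_rfl).symm
  · have h2 : f i < f (f i) := by rw [hf.1.invol]; exact h
    have he := nc_unique_aux L ((f (f i)).val - (f i).val) f f' hf hf' (f i) h2 le_rfl
    rw [hf.1.invol] at he
    have := congrArg f' he
    rw [hf'.1.invol] at this
    exact this

end Aux
section Mirror

variable {n : ℕ}

lemma mirror_val (i : Fin (4 * n)) : (mirror i).val = 4 * n - 1 - i.val := rfl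

lemma mirror_mirror (i : Fin (4 * n)) : mirror (mirror i) = i := by
  apply Fin.ext
  have := i.isLt
  simp only [mirror_val]
  omega

lemma mirror_lt_iff {i j : Fin (4 * n)} : mirror i < mirror j ↔ j < i := by
  have hi := i.isLt
  have hj := j.isLt
  rw [Fin.lt_def, Fin.lt_def, mirror_val, mirror_val]
  omega

lemma extLab_mirror (α : Seq n) (i : Fin (4 * n)) :
    extLab α (mirror i) = ! extLab α i := by
  have hi := i.isLt
  have hm := mirror_val i
  simp only [extLab]
  split_ifs with h1 h2 h3 h4 h5 h6 h7 h8 h9 h10 h11 h12 <;>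
    first
      | rfl
      | omega
      | (simp only [Bool.not_not]
         exact congrArg α (Fin.ext (by simp only [Fin.val_mk]; omega)))
      | (exact congrArg (fun b => ! α b) (Fin.ext (by simp only [Fin.val_mk]; omega)))

lemma isNC_ncgen {α : Seq n} {f : Fin (4 * n) → Fin (4 * n)} (hf : IsNC α f) :
    NCgen (extLab α) f := hf

lemma f_mirror {α : Seq n} {f : Fin (4 * n) → Fin (4 * n)} (hf : IsNC α f)
    (i : Fin (4 * n)) : f (mirror i) = mirror (f i) := by
  have hgen : NCgen (extLab α) (fun j => mirror (f (mirror j))) := by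
    refine ⟨⟨?_, ?_, ?_⟩, ?_⟩
    · intro j
      simp only [mirror_mirror, hf.1.invol, mirror_mirror]
    · intro j hj
      have := congrArg mirror hj
      rw [mirror_mirror] at this
      exact hf.1.nofix (mirror j) this
    · intro a b ha hb hab hbfa
      -- translate to statements about f at mirrored points
      have ha' : f (mirror a) < mirror a := by
        rw [← mirror_mirror (f (mirror a))]; exact mirror_lt_iff.mpr ha
      have hb' : f (mirror b) < mirror b := by
        rw [← mirror_mirror (f (mirror b))]; exact mirror_lt_iff.mpr hb
      have hba : mirror b < mirror a := mirror_lt_iff.mpr hab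
      have hfab : f (mirror a) < mirror b := by
        rw [← mirror_mirror (f (mirror a))]; exact mirror_lt_iff.mpr hbfa
      rw [mirror_lt_iff]
      -- goal : f (mirror a) < f (mirror b)
      by_contra hcon
      push_neg at hcon
      have hne : f (mirror b) ≠ f (mirror a) := by
        intro e
        have := congrArg f e
        rw [hf.1.invol, hf.1.invol] at this
        rw [this] at hba
        exact lt_irrefl _ hba
      have hlt : f (mirror b) < f (mirror a) := lt_of_le_of_ne hcon hne
      have := hf.1.noncross (f (mirror b)) (f (mirror a))
        (by rw [hf.1.invol]; exact hb') (by rw [hf.1.invol]; exact ha') hlt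
        (by rw [hf.1.invol]; exact hfab)
      rw [hf.1.invol, hf.1.invol] at this
      exact absurd hba (not_lt.mpr this.le)
    · intro j hj
      simp only at hj
      have harc : f (mirror j) < mirror j := by
        rw [← mirror_mirror (f (mirror j))]; exact mirror_lt_iff.mpr hj
      have harc2 : f (mirror j) < f (f (mirror j)) := by rw [hf.1.invol]; exact harc
      obtain ⟨hL1, hL2⟩ := hf.2 (f (mirror j)) harc2
      rw [hf.1.invol] at hL2
      constructor
      · rw [← mirror_mirror j, extLab_mirror, hL2]
        rfl
      · simp only
        rw [extLab_mirror, hL1]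
        rfl
  have := nc_unique (isNC_ncgen hf) hgen
  have := congrArg (fun F => F (mirror i)) this
  simp only [mirror_mirror] at this
  exact this

lemma cross_self_mirror {α : Seq n} {f : Fin (4 * n) → Fin (4 * n)} (hf : IsNC α f)
    {a : Fin (4 * n)} (ha : Cross f a) : f a = mirror a := by
  have h1 : a.val < 2 * n := ha.1
  have h2 : 2 * n ≤ (f a).val := ha.2
  have h3 := (f a).isLt
  have hfa' : f (mirror (f a)) = mirror a := by
    rw [f_mirror hf (f a), hf.1.invol]
  have haf : a < f a := Fin.lt_def.mpr (by omega)
  have haf2 : mirror (f a) < f (mirror (f a)) := by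
    rw [hfa']
    exact Fin.lt_def.mpr (by rw [mirror_val, mirror_val]; omega)
  rcases lt_trichotomy a (mirror (f a)) with hc | hc | hc
  · exfalso
    have hv := Fin.lt_def.mp hc
    rw [mirror_val] at hv
    have := hf.1.noncross a (mirror (f a)) haf haf2 hc
      (Fin.lt_def.mpr (by rw [mirror_val]; omega))
    rw [hfa'] at this
    have hv2 := Fin.lt_def.mp this
    rw [mirror_val] at hv2
    omega
  · have h5 := congrArg mirror hc
    rw [mirror_mirror] at h5
    exact h5.symm
  · exfalso
    have hv := Fin.lt_def.mp hc
    rw [mirror_val] at hv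
    have := hf.1.noncross (mirror (f a)) a haf2 haf hc
      (by rw [hfa']; exact Fin.lt_def.mpr (by rw [mirror_val]; omega))
    rw [hfa'] at this
    have hv2 := Fin.lt_def.mp this
    rw [mirror_val] at hv2
    omega

end Mirror
section Parity

lemma even_card_invol {γ : Type*} [DecidableEq γ] :
    ∀ k (s : Finset γ) (f : γ → γ), s.card = k →
      (∀ x ∈ s, f x ∈ s) → (∀ x ∈ s, f (f x) = x) → (∀ x ∈ s, f x ≠ x) →
      Even s.card := by
  intro k
  induction k using Nat.strong_induction_on with
  | _ k ih =>
    intro s f hcard h1 h2 h3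
    rcases s.eq_empty_or_nonempty with rfl | ⟨x, hx⟩
    · simp
    · have hfx := h1 x hx
      have hne : f x ≠ x := h3 x hx
      have hsub : ({x, f x} : Finset γ) ⊆ s := by
        intro y hy
        simp only [Finset.mem_insert, Finset.mem_singleton] at hy
        rcases hy with rfl | rfl
        · exact hx
        · exact hfx
      have hpair : ({x, f x} : Finset γ).card = 2 := Finset.card_pair (Ne.symm hne)
      have h2le : 2 ≤ s.card := by
        calc 2 = ({x, f x} : Finset γ).card := hpair.symm
        _ ≤ s.card := Finset.card_le_card hsub
      set t := s \ {x, f x} with ht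
      have hct : t.card = s.card - 2 := by
        rw [ht, Finset.card_sdiff_of_subset hsub, hpair]
      have hmemt : ∀ y, y ∈ t ↔ y ∈ s ∧ y ≠ x ∧ y ≠ f x := by
        intro y
        simp [ht, Finset.mem_sdiff, and_assoc]
      have ht1 : ∀ y ∈ t, f y ∈ t := by
        intro y hy
        obtain ⟨hys, hyx, hyfx⟩ := (hmemt y).mp hy
        refine (hmemt (f y)).mpr ⟨h1 y hys, ?_, ?_⟩
        · intro e
          apply hyfx
          rw [← h2 y hys, e]
        · intro e
          apply hyx
          have := congrArg f e
          rw [h2 y hys, h2 x hx] at this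
          exact this
      have ht2 : ∀ y ∈ t, f (f y) = y := fun y hy => h2 y ((hmemt y).mp hy).1
      have ht3 : ∀ y ∈ t, f y ≠ y := fun y hy => h3 y ((hmemt y).mp hy).1
      have hev := ih (s.card - 2) (by omega) t f (by omega) ht1 ht2 ht3
      rw [hct] at hev
      obtain ⟨r, hr⟩ := hev
      exact ⟨r + 1, by omega⟩

variable {n : ℕ}

lemma even_ncross {α : Seq n} {f : Fin (4 * n) → Fin (4 * n)} (hf : IsNC α f) :
    Even {c : Fin (4 * n) | Cross f c}.ncard := by
  classical
  rw [Set.ncard_eq_toFinset_card', Set.toFinset_setOf]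
  set R := Finset.univ.filter (fun i : Fin (4 * n) => 2 * n ≤ i.val) with hR
  set RR := R.filter (fun i : Fin (4 * n) => 2 * n ≤ (f i).val) with hRR
  set CR := R.filter (fun i : Fin (4 * n) => ¬ 2 * n ≤ (f i).val) with hCR
  have hsplit : RR.card + CR.card = R.card :=
    Finset.card_filter_add_card_filter_not _
  have hRcard : R.card = 2 * n := by
    have himg : R.image Fin.val = Finset.Ico (2 * n) (4 * n) := by
      ext j
      simp only [Finset.mem_image, Finset.mem_Ico, hR, Finset.mem_filter,
        Finset.mem_univ, true_and]
      constructor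
      · rintro ⟨a, h2n, rfl⟩
        exact ⟨h2n, a.isLt⟩
      · rintro ⟨hj1, hj2⟩
        exact ⟨⟨j, hj2⟩, hj1, rfl⟩
    have hinj : Set.InjOn Fin.val (R : Set (Fin (4 * n))) := fun a _ b _ h => Fin.ext h
    have := Finset.card_image_of_injOn hinj
    rw [himg, Nat.card_Ico] at this
    omega
  have hRRmem : ∀ i, i ∈ RR ↔ 2 * n ≤ i.val ∧ 2 * n ≤ (f i).val := by
    intro i
    simp [hRR, hR, Finset.mem_filter]
  have hevenRR : Even RR.card := by
    refine even_card_invol RR.card RR f rfl ?_ ?_ ?_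
    · intro x hxm
      obtain ⟨hx1, hx2⟩ := (hRRmem x).mp hxm
      refine (hRRmem (f x)).mpr ⟨hx2, ?_⟩
      rw [hf.1.invol]
      exact hx1
    · intro x _; exact hf.1.invol x
    · intro x _; exact hf.1.nofix x
  have hbij : (Finset.univ.filter (fun i : Fin (4 * n) => Cross f i)).card = CR.card := by
    refine Finset.card_bij' (fun a _ => f a) (fun a _ => f a) ?_ ?_ ?_ ?_
    · intro a ha
      simp only [Finset.mem_filter, Finset.mem_univ, true_and] at ha
      obtain ⟨ha1, ha2⟩ := ha
      simp only [hCR, hR, Finset.mem_filter, Finset.mem_univ, true_and]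
      refine ⟨ha2, ?_⟩
      rw [hf.1.invol]
      omega
    · intro a ha
      simp only [hCR, hR, Finset.mem_filter, Finset.mem_univ, true_and] at ha
      simp only [Finset.mem_filter, Finset.mem_univ, true_and]
      exact ⟨by omega, by rw [hf.1.invol]; exact ha.1⟩
    · intro a _; exact hf.1.invol a
    · intro a _; exact hf.1.invol a
  obtain ⟨r, hr⟩ := hevenRR
  have hcr : CR.card = 2 * n - (r + r) := by omega
  rw [hbij, hcr]
  have hrn : r + r ≤ 2 * n := by omega
  exact ⟨n - r, by omega⟩

end Parity
section Rank

variable {n : ℕ}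

lemma rank_pos {f : Fin (4 * n) → Fin (4 * n)} {a : Fin (4 * n)} (hc : Cross f a) :
    1 ≤ rank f a := by
  show 0 < ({b : Fin (4 * n) | Cross f b ∧ a ≤ b}).ncard
  exact (Set.ncard_pos (Set.toFinite _)).mpr ⟨a, ⟨hc, le_refl a⟩⟩

lemma rank_le {f : Fin (4 * n) → Fin (4 * n)} (a : Fin (4 * n)) :
    rank f a ≤ {c : Fin (4 * n) | Cross f c}.ncard :=
  Set.ncard_le_ncard (fun c hc => hc.1) (Set.toFinite _)

lemma exists_partner_below {f : Fin (4 * n) → Fin (4 * n)} {a : Fin (4 * n)}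
    (hc : Cross f a) (hlt : rank f a < {c : Fin (4 * n) | Cross f c}.ncard) :
    ∃ b, Cross f b ∧ rank f b = rank f a + 1 := by
  classical
  have hex : ∃ c : Fin (4 * n), Cross f c ∧ c < a := by
    by_contra hno
    push_neg at hno
    have hEq : {c : Fin (4 * n) | Cross f c} = {b : Fin (4 * n) | Cross f b ∧ a ≤ b} := by
      ext c
      exact ⟨fun h => ⟨h, hno c h⟩, fun h => h.1⟩
    rw [hEq] at hlt
    exact lt_irrefl _ hlt
  set s := Finset.univ.filter (fun c : Fin (4 * n) => Cross f c ∧ c < a) with hs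
  have hsne : s.Nonempty := by
    obtain ⟨c, h1, h2⟩ := hex
    refine ⟨c, ?_⟩
    simp only [hs, Finset.mem_filter, Finset.mem_univ, true_and]
    exact ⟨h1, h2⟩
  set b := s.max' hsne with hb
  have hbm : Cross f b ∧ b < a := by
    have := s.max'_mem hsne
    simp only [hs, Finset.mem_filter, Finset.mem_univ, true_and] at this
    exact this
  refine ⟨b, hbm.1, ?_⟩
  have hset : {c : Fin (4 * n) | Cross f c ∧ b ≤ c}
      = insert b {c : Fin (4 * n) | Cross f c ∧ a ≤ c} := by
    ext c
    simp only [Set.mem_setOf_eq, Set.mem_insert_iff]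
    constructor
    · rintro ⟨h1, h2⟩
      rcases lt_or_ge c a with h3 | h3
      · left
        have hmem : c ∈ s := by
          simp only [hs, Finset.mem_filter, Finset.mem_univ, true_and]
          exact ⟨h1, h3⟩
        exact le_antisymm (s.le_max' c hmem) h2
      · right; exact ⟨h1, h3⟩
    · rintro (rfl | ⟨h1, h2⟩)
      · exact ⟨hbm.1, le_refl b⟩
      · exact ⟨h1, le_trans (le_of_lt hbm.2) h2⟩
  have hnot : b ∉ {c : Fin (4 * n) | Cross f c ∧ a ≤ c} := by
    rintro ⟨-, h2⟩
    exact absurd hbm.2 (not_lt.mpr h2)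
  show ({c : Fin (4 * n) | Cross f c ∧ b ≤ c}).ncard = rank f a + 1
  rw [hset, Set.ncard_insert_of_notMem hnot]
  rfl

lemma exists_partner_above {f : Fin (4 * n) → Fin (4 * n)} {a : Fin (4 * n)}
    (hc : Cross f a) (h2 : 2 ≤ rank f a) :
    ∃ b, Cross f b ∧ rank f a = rank f b + 1 := by
  classical
  have hex : ∃ c : Fin (4 * n), Cross f c ∧ a < c := by
    by_contra hno
    push_neg at hno
    have hsub : {b : Fin (4 * n) | Cross f b ∧ a ≤ b} ⊆ {a} := by
      rintro c ⟨h1, h3⟩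
      have hca : c = a := le_antisymm (hno c h1) h3
      simp [hca]
    have hle := Set.ncard_le_ncard hsub (Set.toFinite _)
    rw [Set.ncard_singleton] at hle
    have : rank f a ≤ 1 := hle
    omega
  set s := Finset.univ.filter (fun c : Fin (4 * n) => Cross f c ∧ a < c) with hs
  have hsne : s.Nonempty := by
    obtain ⟨c, h1, h2⟩ := hex
    refine ⟨c, ?_⟩
    simp only [hs, Finset.mem_filter, Finset.mem_univ, true_and]
    exact ⟨h1, h2⟩
  set b := s.min' hsne with hb
  have hbm : Cross f b ∧ a < b := by
    have := s.min'_mem hsne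
    simp only [hs, Finset.mem_filter, Finset.mem_univ, true_and] at this
    exact this
  refine ⟨b, hbm.1, ?_⟩
  have hset : {c : Fin (4 * n) | Cross f c ∧ a ≤ c}
      = insert a {c : Fin (4 * n) | Cross f c ∧ b ≤ c} := by
    ext c
    simp only [Set.mem_setOf_eq, Set.mem_insert_iff]
    constructor
    · rintro ⟨h1, h3⟩
      rcases eq_or_lt_of_le h3 with h4 | h4
      · left; exact h4.symm
      · right
        have hmem : c ∈ s := by
          simp only [hs, Finset.mem_filter, Finset.mem_univ, true_and]
          exact ⟨h1, h4⟩
        exact ⟨h1, s.min'_le c hmem⟩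
    · rintro (rfl | ⟨h1, h4⟩)
      · exact ⟨hc, le_refl c⟩
      · exact ⟨h1, le_trans (le_of_lt hbm.2) h4⟩
  have hnot : a ∉ {c : Fin (4 * n) | Cross f c ∧ b ≤ c} := by
    rintro ⟨-, h4⟩
    exact absurd hbm.2 (not_lt.mpr h4)
  show ({c : Fin (4 * n) | Cross f c ∧ a ≤ c}).ncard = rank f b + 1
  rw [hset, Set.ncard_insert_of_notMem hnot]
  rfl

end Rank

section GMirror

variable {n : ℕ} {α : Seq n}

lemma g_mirror_cross (D : CupDiagram n α) {i : Fin (4 * n)} (hc : Cross D.f i) :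
    D.g (mirror i) = mirror (D.g i) := by
  have hfi : D.f i = mirror i := cross_self_mirror D.matching hc
  rcases Nat.even_or_odd (rank D.f i) with he | ho
  · -- even rank: partner above
    have h1 : 1 ≤ rank D.f i := rank_pos hc
    have h2 : 2 ≤ rank D.f i := by
      obtain ⟨r, hr⟩ := he
      omega
    obtain ⟨b, hcb, hr⟩ := exists_partner_above hc h2
    have hob : Odd (rank D.f b) := by
      obtain ⟨r, hr2⟩ := he
      exact ⟨(rank D.f b - 1) / 2, by omega⟩
    obtain ⟨e1, e2, e3, e4⟩ := D.link b i hcb hc hob hr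
    have hfb : D.f b = mirror b := cross_self_mirror D.matching hcb
    rw [← hfi, e3, e2, hfb, mirror_mirror]
  · -- odd rank: partner below
    have hlt : rank D.f i < {c : Fin (4 * n) | Cross D.f c}.ncard := by
      have h1 := rank_le (f := D.f) i
      obtain ⟨p, hp⟩ := even_ncross D.matching
      obtain ⟨k, hk⟩ := ho
      omega
    obtain ⟨b, hcb, hr⟩ := exists_partner_below hc hlt
    obtain ⟨e1, e2, e3, e4⟩ := D.link i b hc hcb ho hr
    have hfb : D.f b = mirror b := cross_self_mirror D.matching hcb
    rw [← hfi, e4, e1, hfb, mirror_mirror]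

lemma g_mirror (D : CupDiagram n α) (i : Fin (4 * n)) :
    D.g (mirror i) = mirror (D.g i) := by
  by_cases h1 : Cross D.f i
  · exact g_mirror_cross D h1
  by_cases h2 : Cross D.f (D.f i)
  · have hj := g_mirror_cross D h2
    have hinv : D.f (D.f i) = i := D.matching.1.invol i
    have him : i = mirror (D.f i) := by
      rw [← cross_self_mirror D.matching h2, hinv]
    have hmi : mirror i = D.f i := by
      conv_lhs => rw [him]
      rw [mirror_mirror]
    calc D.g (mirror i) = D.g (D.f i) := by rw [hmi]
      _ = mirror (mirror (D.g (D.f i))) := (mirror_mirror _).symm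
      _ = mirror (D.g (mirror (D.f i))) := by rw [hj]
      _ = mirror (D.g i) := by rw [← him]
  · have hval := i.isLt
    have hvf := (D.f i).isLt
    have h3 : ¬ Cross D.f (mirror i) := by
      rintro ⟨hm1, hm2⟩
      rw [f_mirror D.matching i, mirror_val] at hm2
      rw [mirror_val] at hm1
      exact h2 ⟨by omega, by rw [D.matching.1.invol]; omega⟩
    have h4 : ¬ Cross D.f (D.f (mirror i)) := by
      rintro ⟨hm1, hm2⟩
      rw [f_mirror D.matching i] at hm1 hm2
      rw [mirror_val] at hm1
      rw [f_mirror D.matching (D.f i), D.matching.1.invol, mirror_val] at hm2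
      exact h1 ⟨by omega, by omega⟩
    rw [D.agree i h1 h2, D.agree (mirror i) h3 h4, f_mirror D.matching i]

end GMirror

section Circles

variable {n : ℕ}

lemma circrel_mirror {gb gt : Fin (4 * n) → Fin (4 * n)}
    (hb : ∀ i, gb (mirror i) = mirror (gb i)) (ht : ∀ i, gt (mirror i) = mirror (gt i))
    {x y : Fin (4 * n)} (h : CircRel gb gt x y) :
    CircRel gb gt (mirror x) (mirror y) := by
  induction h with
  | rel a b hab =>
      refine Relation.EqvGen.rel _ _ ?_
      rcases hab with h' | h'
      · exact Or.inl (by rw [hb, h'])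
      · exact Or.inr (by rw [ht, h'])
  | refl a => exact Relation.EqvGen.refl _
  | symm a b _ ih => exact Relation.EqvGen.symm _ _ ih
  | trans a b c _ _ ih1 ih2 => exact Relation.EqvGen.trans _ _ _ ih1 ih2

lemma circ_step_b {gb gt : Fin (4 * n) → Fin (4 * n)} {p x : Fin (4 * n)}
    (h : CircRel gb gt p x) : CircRel gb gt p (gb x) :=
  Relation.EqvGen.trans _ _ _ h (Relation.EqvGen.rel _ _ (Or.inl rfl))

lemma circ_step_t {gb gt : Fin (4 * n) → Fin (4 * n)} {p x : Fin (4 * n)}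
    (h : CircRel gb gt p x) : CircRel gb gt p (gt x) :=
  Relation.EqvGen.trans _ _ _ h (Relation.EqvGen.rel _ _ (Or.inr rfl))

end Circles
/-- In a circle diagram formed by gluing a cap diagram (the vertical
reflection of the cup diagram `C(w')`) on top of a cup diagram `C(w)` (type `D`), any
circle that crosses the middle axis either contains both members of every linked pair it
meets, or contains exactly one member of every linked pair it meets. -/
theorem statement_10 (n : ℕ) (hn : 4 ≤ n) (α β : Seq n)
    (hα : EvenMinus α) (hβ : EvenMinus β)
    (D : CupDiagram n α) (E : CupDiagram n β) (p : Fin (4 * n))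
    (hmid : ∃ a, a ∈ circleAt D.g E.g p ∧ (Cross D.f a ∨ Cross E.f a)) :
    (∀ a b, (D.Linked a b ∨ E.Linked a b) →
        (a ∈ circleAt D.g E.g p ∨ b ∈ circleAt D.g E.g p) →
        (a ∈ circleAt D.g E.g p ∧ b ∈ circleAt D.g E.g p)) ∨
    (∀ a b, (D.Linked a b ∨ E.Linked a b) →
        (a ∈ circleAt D.g E.g p ∨ b ∈ circleAt D.g E.g p) →
        Xor' (a ∈ circleAt D.g E.g p) (b ∈ circleAt D.g E.g p)) := by
  classical
  have hDb : ∀ i, D.g (mirror i) = mirror (D.g i) := g_mirror D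
  have hEb : ∀ i, E.g (mirror i) = mirror (E.g i) := g_mirror E
  have hmir : ∀ x y : Fin (4 * n), CircRel D.g E.g x y →
      CircRel D.g E.g (mirror x) (mirror y) := fun x y h => circrel_mirror hDb hEb h
  have key : ∀ a b : Fin (4 * n), (D.Linked a b ∨ E.Linked a b) →
      (CircRel D.g E.g p a → CircRel D.g E.g p (mirror b)) ∧
      (CircRel D.g E.g p b → CircRel D.g E.g p (mirror a)) := by
    intro a b hl
    rcases hl with hl | hl
    · obtain ⟨e1, e2, e3, e4⟩ := D.link a b hl.1 hl.2.1 hl.2.2.1 hl.2.2.2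
      have hfb : D.f b = mirror b := cross_self_mirror D.matching hl.2.1
      have hfa : D.f a = mirror a := cross_self_mirror D.matching hl.1
      constructor
      · intro hx
        have := circ_step_b hx
        rwa [e1, hfb] at this
      · intro hx
        have := circ_step_b hx
        rwa [e2, hfa] at this
    · obtain ⟨e1, e2, e3, e4⟩ := E.link a b hl.1 hl.2.1 hl.2.2.1 hl.2.2.2
      have hfb : E.f b = mirror b := cross_self_mirror E.matching hl.2.1
      have hfa : E.f a = mirror a := cross_self_mirror E.matching hl.1
      constructor
      · intro hx
        have := circ_step_t hx
        rwa [e1, hfb] at this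
      · intro hx
        have := circ_step_t hx
        rwa [e2, hfa] at this
  by_cases hsym : CircRel D.g E.g p (mirror p)
  · left
    intro a b hl hmem
    have hclose : ∀ x : Fin (4 * n), CircRel D.g E.g p (mirror x) →
        CircRel D.g E.g p x := by
      intro x hx
      have h2 := hmir _ _ hx
      rw [mirror_mirror] at h2
      exact Relation.EqvGen.trans _ _ _ hsym h2
    rcases hmem with h | h
    · exact ⟨h, hclose b ((key a b hl).1 h)⟩
    · exact ⟨hclose a ((key a b hl).2 h), h⟩
  · right
    intro a b hl hmem
    have hdisj : ∀ x : Fin (4 * n), CircRel D.g E.g p x →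
        CircRel D.g E.g p (mirror x) → False := by
      intro x h1 h2
      apply hsym
      have h2' := hmir _ _ h2
      rw [mirror_mirror] at h2'
      exact Relation.EqvGen.trans _ _ _ h1 (Relation.EqvGen.symm _ _ h2')
    rcases hmem with h | h
    · exact Or.inl ⟨h, fun hb => hdisj b hb ((key a b hl).1 h)⟩
    · exact Or.inr ⟨h, fun ha => hdisj a ha ((key a b hl).2 h)⟩

end TypeD
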